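/- arXiv:2306.05161 — 3 statements merged into one kernel-verified Lean document; each statement's English description precedes it below -/
import Mathlib

section
/- Let V : [t₀, ∞) → ℝ be differentiable with V ≥ 0, and suppose V'(t) ≤ ω·max{V(t), V(t₀)} + c for all t ≥ t₀, where ω > 0 and c ≥ 0. Then V(t) ≤ e^{ω(t−t₀)}·V(t₀) + (c/ω)·e^{ω(t−t₀)} for all t ≥ t₀. -/
theorem stmt_4 (t₀ ω c : ℝ) (V V' : ℝ → ℝ) (hω : 0 < ω) (hc : 0 ≤ c)
    (hVnonneg : ∀ t, t₀ ≤ t → 0 ≤ V t)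
    (hderiv : ∀ t, t₀ ≤ t → HasDerivAt V (V' t) t)
    (hineq : ∀ t, t₀ ≤ t → V' t ≤ ω * max (V t) (V t₀) + c) :
    ∀ t, t₀ ≤ t →
      V t ≤ Real.exp (ω * (t - t₀)) * V t₀ + (c / ω) * Real.exp (ω * (t - t₀)) := by
  intro t ht
  set E : ℝ := Real.exp (ω * (t - t₀)) with hE
  clear_value E
  have hEpos : 0 < E := hE ▸ Real.exp_pos _
  -- key estimate with a positive slack ε
  have key : ∀ ε > 0, V t ≤ E * (V t₀ + (c + ε) / ω) - (c + ε) / ω := by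
    intro ε hε
    set k : ℝ := V t₀ + (c + ε) / ω with hk
    clear_value k
    have hk0 : 0 ≤ k := by
      rw [hk]
      have h1 : 0 ≤ (c + ε) / ω := by positivity
      linarith [hVnonneg t₀ le_rfl]
    have hmain : ∀ ⦃x⦄, x ∈ Set.Icc t₀ t →
        V x ≤ Real.exp (ω * (x - t₀)) * k - (c + ε) / ω := by
      have harg1 : ContinuousOn V (Set.Icc t₀ t) := fun x hx =>
        ((hderiv x hx.1).continuousAt).continuousWithinAt
      have harg2 : ∀ x ∈ Set.Ico t₀ t, HasDerivWithinAt V (V' x) (Set.Ici x) x := fun x hx =>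
        (hderiv x hx.1).hasDerivWithinAt
      have harg3 : V t₀ ≤ Real.exp (ω * (t₀ - t₀)) * k - (c + ε) / ω := by
        rw [hk]; simp
      have harg4 : ContinuousOn (fun x => Real.exp (ω * (x - t₀)) * k - (c + ε) / ω)
          (Set.Icc t₀ t) := by fun_prop
      have harg5 : ∀ x ∈ Set.Ico t₀ t,
          HasDerivWithinAt (fun x => Real.exp (ω * (x - t₀)) * k - (c + ε) / ω)
            (ω * Real.exp (ω * (x - t₀)) * k) (Set.Ici x) x := by
        intro x _
        have h1 : HasDerivAt (fun y => ω * (y - t₀)) ω x := by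
          simpa using ((hasDerivAt_id x).sub_const t₀).const_mul ω
        have h2 : HasDerivAt (fun y => Real.exp (ω * (y - t₀)) * k - (c + ε) / ω)
            (Real.exp (ω * (x - t₀)) * ω * k) x :=
          ((h1.exp).mul_const k).sub_const _
        have : Real.exp (ω * (x - t₀)) * ω * k = ω * Real.exp (ω * (x - t₀)) * k := by ring
        exact (this ▸ h2).hasDerivWithinAt
      have harg6 : ∀ x ∈ Set.Ico t₀ t,
          V x = Real.exp (ω * (x - t₀)) * k - (c + ε) / ω →
          V' x < ω * Real.exp (ω * (x - t₀)) * k := by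
        intro x hx hfB
        have hx1 : t₀ ≤ x := hx.1
        have hexp1 : (1 : ℝ) ≤ Real.exp (ω * (x - t₀)) :=
          Real.one_le_exp (by nlinarith [hx.1])
        have hBx : V t₀ ≤ V x := by
          rw [hfB]
          nlinarith [mul_nonneg (sub_nonneg.2 hexp1) hk0, hk]
        have hmax : max (V x) (V t₀) = V x := max_eq_left hBx
        have := hineq x hx1
        rw [hmax] at this
        calc V' x ≤ ω * V x + c := this
          _ < ω * V x + (c + ε) := by linarith
          _ = ω * Real.exp (ω * (x - t₀)) * k := by rw [hfB, hk]; field_simp; ring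
      exact image_le_of_deriv_right_lt_deriv_boundary' harg1 harg2 harg3 harg4 harg5 harg6
    have := hmain (Set.mem_Icc.mpr ⟨ht, le_rfl⟩)
    simpa [hE] using this
  -- take ε → 0
  have : ∀ δ > 0, V t ≤ (E * V t₀ + (c / ω) * E) + δ := by
    intro δ hδ
    have hεpos : 0 < δ * ω / E := by positivity
    have h := key _ hεpos
    have hEne : E ≠ 0 := ne_of_gt hEpos
    calc V t ≤ E * (V t₀ + (c + δ * ω / E) / ω) - (c + δ * ω / E) / ω := h
      _ ≤ E * (V t₀ + (c + δ * ω / E) / ω) := by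
          have : 0 ≤ (c + δ * ω / E) / ω := by positivity
          linarith
      _ = E * V t₀ + (c / ω) * E + δ := by field_simp; ring
  linarith [le_of_forall_pos_le_add this]
end

section
/- Let x : [t₀, ∞) → ℝⁿ and e(t) := x(t₀) − x(t) (so ė = −ẋ). Suppose ‖ẋ(t)‖ ≤ G‖x(t)‖ + H‖e(t)‖ + C·W for constants G, H, C ≥ 0 and W ≥ 0 with W > 0 or x(t) ≠ 0. Define φ(t) := ‖e(t)‖/√(‖x(t)‖² + W²). Then, wherever φ is differentiable, φ'(t) ≤ (G + C) + (G + H + C)·φ(t) + H·φ(t)². -/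
open Filter Topology

lemma abs_le_of_hasDerivAt_norm {E : Type*} [NormedAddCommGroup E] [NormedSpace ℝ E]
    (f : ℝ → E) (f' : E) (t m : ℝ) (hf : HasDerivAt f f' t)
    (hm : HasDerivAt (fun s => ‖f s‖) m t) : |m| ≤ ‖f'‖ := by
  have h1 : Tendsto (fun s => |slope (fun s => ‖f s‖) t s|) (𝓝[≠] t) (𝓝 |m|) :=
    (hasDerivAt_iff_tendsto_slope.mp hm).abs
  have h2 : Tendsto (fun s => ‖slope f t s‖) (𝓝[≠] t) (𝓝 ‖f'‖) :=
    (hasDerivAt_iff_tendsto_slope.mp hf).norm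
  refine le_of_tendsto_of_tendsto' h1 h2 (fun s => ?_)
  rw [slope_def_field, slope_def_module, norm_smul, abs_div]
  simp only [norm_inv, Real.norm_eq_abs]
  rw [div_eq_inv_mul]
  gcongr
  exact abs_norm_sub_norm_le _ _

theorem stmt_14 (n : ℕ) (t₀ G H C W : ℝ) (hG : 0 ≤ G) (hH : 0 ≤ H)
    (hC : 0 ≤ C) (hW : 0 ≤ W)
    (x x' : ℝ → EuclideanSpace ℝ (Fin n))
    (hx : ∀ t, HasDerivAt x (x' t) t)
    (hnd : 0 < W ∨ ∀ t, x t ≠ 0)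
    (hbound : ∀ t, ‖x' t‖ ≤ G * ‖x t‖ + H * ‖x t₀ - x t‖ + C * W) :
    ∀ t d,
      HasDerivAt (fun s => ‖x t₀ - x s‖ / Real.sqrt (‖x s‖ ^ 2 + W ^ 2)) d t →
      d ≤ (G + C) + (G + H + C) * (‖x t₀ - x t‖ / Real.sqrt (‖x t‖ ^ 2 + W ^ 2)) +
            H * (‖x t₀ - x t‖ / Real.sqrt (‖x t‖ ^ 2 + W ^ 2)) ^ 2 := by
  intro t d hd
  have hqpos : ∀ s, 0 < ‖x s‖ ^ 2 + W ^ 2 := by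
    intro s
    rcases hnd with h | h
    · positivity
    · have := h s
      have : 0 < ‖x s‖ := norm_pos_iff.mpr this
      positivity
  set ψ : ℝ → ℝ := fun s => Real.sqrt (‖x s‖ ^ 2 + W ^ 2) with hψdef
  have hψpos : ∀ s, 0 < ψ s := fun s => Real.sqrt_pos.mpr (hqpos s)
  have hψsq : ∀ s, ψ s ^ 2 = ‖x s‖ ^ 2 + W ^ 2 := fun s =>
    Real.sq_sqrt (hqpos s).le
  -- derivative of ψ
  have hq : HasDerivAt (fun s => ‖x s‖ ^ 2 + W ^ 2)
      (inner ℝ (x t) (x' t) + inner ℝ (x' t) (x t) : ℝ) t := by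
    have := ((hx t).inner ℝ (hx t)).add_const (W ^ 2)
    simpa only [real_inner_self_eq_norm_sq] using this
  have hψ : HasDerivAt ψ
      (((inner ℝ (x t) (x' t) + inner ℝ (x' t) (x t) : ℝ)) / (2 * ψ t)) t :=
    hq.sqrt (hqpos t).ne'
  set ψ' : ℝ := ((inner ℝ (x t) (x' t) + inner ℝ (x' t) (x t) : ℝ)) / (2 * ψ t)
  -- bound on |ψ'|
  have hxle : ∀ s, ‖x s‖ ≤ ψ s := by
    intro s
    have h := hψsq s
    nlinarith [hψpos s, norm_nonneg (x s), sq_nonneg W]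
  have hWle : ∀ s, W ≤ ψ s := by
    intro s
    have h := hψsq s
    nlinarith [hψpos s, norm_nonneg (x s)]
  have hψ'le : |ψ'| * ψ t ≤ ‖x' t‖ * ψ t := by
    have hcs1 : |(inner ℝ (x t) (x' t) : ℝ)| ≤ ‖x t‖ * ‖x' t‖ := abs_real_inner_le_norm _ _
    have hcs2 : |(inner ℝ (x' t) (x t) : ℝ)| ≤ ‖x' t‖ * ‖x t‖ := abs_real_inner_le_norm _ _
    have : |ψ'| ≤ (‖x t‖ * ‖x' t‖) / ψ t := by
      rw [abs_div, abs_of_pos (by nlinarith [hψpos t] : (0:ℝ) < 2 * ψ t), div_le_div_iff₀ (by nlinarith [hψpos t]) (hψpos t)]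
      calc |(inner ℝ (x t) (x' t) + inner ℝ (x' t) (x t) : ℝ)| * ψ t
          ≤ (‖x t‖ * ‖x' t‖ + ‖x' t‖ * ‖x t‖) * ψ t := by
            have := abs_add_le (inner ℝ (x t) (x' t) : ℝ) (inner ℝ (x' t) (x t) : ℝ)
            nlinarith [hψpos t]
        _ = ‖x t‖ * ‖x' t‖ * (2 * ψ t) := by ring
    have h2 : |ψ'| * ψ t ≤ ‖x t‖ * ‖x' t‖ := by
      rw [← le_div_iff₀ (hψpos t)]; exact this
    calc |ψ'| * ψ t ≤ ‖x t‖ * ‖x' t‖ := h2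
      _ ≤ ‖x' t‖ * ψ t := by nlinarith [hxle t, norm_nonneg (x' t)]
  -- the product φ * ψ = ‖e‖ has derivative m
  set φ : ℝ → ℝ := fun s => ‖x t₀ - x s‖ / ψ s with hφdef
  have hprod : HasDerivAt (fun s => φ s * ψ s) (d * ψ t + φ t * ψ') t := hd.mul hψ
  have heq : (fun s => φ s * ψ s) = fun s => ‖x t₀ - x s‖ := by
    funext s
    exact div_mul_cancel₀ _ (hψpos s).ne'
  rw [heq] at hprod
  have he : HasDerivAt (fun s => x t₀ - x s) (-(x' t)) t := (hx t).const_sub _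
  have hmle : |d * ψ t + φ t * ψ'| ≤ ‖x' t‖ := by
    have := abs_le_of_hasDerivAt_norm _ _ t _ he hprod
    simpa using this
  -- assemble
  have hφnn : 0 ≤ φ t := div_nonneg (norm_nonneg _) (hψpos t).le
  have heψ : ‖x t₀ - x t‖ = φ t * ψ t := (div_mul_cancel₀ _ (hψpos t).ne').symm
  have hb := hbound t
  have key : d * ψ t ≤ ((G + C) + (G + H + C) * φ t + H * φ t ^ 2) * ψ t := by
    have h1 : d * ψ t ≤ ‖x' t‖ + φ t * |ψ'| := by
      have := abs_le.mp hmle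
      nlinarith [abs_le.mp hmle, le_abs_self ψ', neg_abs_le ψ']
    have h2 : ‖x' t‖ ≤ G * ψ t + H * (φ t * ψ t) + C * ψ t := by
      rw [heψ] at hb
      nlinarith [hxle t, hWle t]
    have h3 : φ t * |ψ'| * ψ t ≤ φ t * ‖x' t‖ * ψ t := by
      nlinarith [hψ'le, hφnn]
    have h4 : φ t * ‖x' t‖ ≤ φ t * (G * ψ t + H * (φ t * ψ t) + C * ψ t) := by
      nlinarith [hφnn]
    nlinarith [hψpos t, hφnn, norm_nonneg (x' t)]
  have := (mul_le_mul_iff_of_pos_right (hψpos t)).mp key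
  exact this
end

section
/- Let λ > 0 and suppose V : [0,∞) → ℝ satisfies, over a finite partition 0 = s₀ < s₁ < ... < s_N = t, on each interval [s_j, s_{j+1}) either V(s) ≤ e^{−ω₁(s − s_j)}V(s_j) + c (a 'good' interval) or V(s) ≤ e^{ω₂(s − s_j)}V(s_j) + c·e^{ω₂(s − s_j)} (a 'bad' interval), with ω₁, ω₂ > 0, c ≥ 0, and V continuous at the partition points. Then V(t) ≤ e^{−ω₁·|G| + ω₂·|B|}·V(0) + c·Σ_{j=0}^{N−1} e^{−ω₁·|G ∩ [s_{j+1}, t]| + ω₂·|B ∩ [s_j, t]|}, where |G| and |B| denote the total lengths of good and bad intervals in [0,t]. -/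
/-- Total length of the "good" (resp. complement: "bad") intervals among
intervals `[s j, s (j+1))` for `j ∈ [k, N)`. -/
noncomputable def goodLen (s : ℕ → ℝ) (good : ℕ → Prop) [DecidablePred good]
    (N k : ℕ) : ℝ :=
  ∑ j ∈ Finset.Ico k N, if good j then s (j + 1) - s j else 0

noncomputable def badLen (s : ℕ → ℝ) (good : ℕ → Prop) [DecidablePred good]
    (N k : ℕ) : ℝ :=
  ∑ j ∈ Finset.Ico k N, if good j then 0 else s (j + 1) - s j

lemma ext_le_aux {f g : ℝ → ℝ} (hf : Continuous f) (hg : Continuous g) {a b : ℝ}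
    (hab : a < b) (h : ∀ u ∈ Set.Ico a b, f u ≤ g u) : f b ≤ g b := by
  have hcl : Set.Ico a b ⊆ {x | f x ≤ g x} := h
  have h2 := closure_minimal hcl (isClosed_le hf hg)
  rw [closure_Ico hab.ne] at h2
  exact h2 (Set.right_mem_Icc.2 hab.le)

theorem stmt_16 (ω₁ ω₂ c t : ℝ) (hω₁ : 0 < ω₁) (hω₂ : 0 < ω₂) (hc : 0 ≤ c)
    (N : ℕ) (hN : 0 < N) (s : ℕ → ℝ) (good : ℕ → Prop) [DecidablePred good]
    (hs0 : s 0 = 0) (hsN : s N = t)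
    (hmono : ∀ j, j < N → s j < s (j + 1))
    (V : ℝ → ℝ) (hVcont : Continuous V) (hVnonneg : ∀ u, 0 ≤ V u)
    (hgood : ∀ j, j < N → good j →
      ∀ u ∈ Set.Ico (s j) (s (j + 1)),
        V u ≤ Real.exp (-ω₁ * (u - s j)) * V (s j) + c)
    (hbad : ∀ j, j < N → ¬ good j →
      ∀ u ∈ Set.Ico (s j) (s (j + 1)),
        V u ≤ Real.exp (ω₂ * (u - s j)) * V (s j) + c * Real.exp (ω₂ * (u - s j))) :
    V t ≤ Real.exp (-ω₁ * goodLen s good N 0 + ω₂ * badLen s good N 0) * V 0 +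
        c * ∑ j ∈ Finset.range N,
              Real.exp (-ω₁ * goodLen s good N (j + 1) + ω₂ * badLen s good N j) := by
  have key : ∀ m, m ≤ N → V (s m) ≤
      Real.exp (-ω₁ * goodLen s good m 0 + ω₂ * badLen s good m 0) * V 0 +
      c * ∑ j ∈ Finset.range m,
        Real.exp (-ω₁ * goodLen s good m (j + 1) + ω₂ * badLen s good m j) := by
    intro m hm
    induction m with
    | zero => simp [goodLen, badLen, hs0]
    | succ m ih =>
      have hmN : m < N := hm
      have ih' := ih hmN.le
      set Δ : ℝ := s (m + 1) - s m with hΔ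
      have hΔpos : 0 < Δ := sub_pos.2 (hmono m hmN)
      set α : ℝ := Real.exp (-ω₁ * (if good m then Δ else 0) +
        ω₂ * (if good m then 0 else Δ)) with hα
      set β : ℝ := Real.exp (ω₂ * (if good m then 0 else Δ)) with hβ
      have hstep : V (s (m + 1)) ≤ α * V (s m) + c * β := by
        by_cases hg : good m
        · have h := ext_le_aux hVcont (by fun_prop) (hmono m hmN) (hgood m hmN hg)
          simpa [hα, hβ, hg, hΔ] using h
        · have h := ext_le_aux hVcont (by fun_prop) (hmono m hmN) (hbad m hmN hg)
          simpa [hα, hβ, hg, hΔ] using h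
      have hG : ∀ k, k ≤ m → goodLen s good (m + 1) k =
          goodLen s good m k + (if good m then Δ else 0) := by
        intro k hk
        simp [goodLen, Finset.sum_Ico_succ_top hk, hΔ]
      have hB : ∀ k, k ≤ m → badLen s good (m + 1) k =
          badLen s good m k + (if good m then 0 else Δ) := by
        intro k hk
        simp [badLen, Finset.sum_Ico_succ_top hk, hΔ]
      have hE : Real.exp (-ω₁ * goodLen s good (m + 1) 0 + ω₂ * badLen s good (m + 1) 0) =
          α * Real.exp (-ω₁ * goodLen s good m 0 + ω₂ * badLen s good m 0) := by
        rw [hG 0 (Nat.zero_le m), hB 0 (Nat.zero_le m), hα, ← Real.exp_add]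
        ring_nf
      have hterm : ∀ j, j < m →
          Real.exp (-ω₁ * goodLen s good (m + 1) (j + 1) + ω₂ * badLen s good (m + 1) j) =
          α * Real.exp (-ω₁ * goodLen s good m (j + 1) + ω₂ * badLen s good m j) := by
        intro j hj
        rw [hG (j + 1) hj, hB j hj.le, hα, ← Real.exp_add]
        ring_nf
      have hlast : Real.exp (-ω₁ * goodLen s good (m + 1) (m + 1) +
          ω₂ * badLen s good (m + 1) m) = β := by
        have h1 : goodLen s good (m + 1) (m + 1) = 0 := by simp [goodLen]
        have h2 : badLen s good (m + 1) m = (if good m then 0 else Δ) := by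
          simp [badLen, Finset.sum_Ico_eq_sum_range, hΔ]
        rw [h1, h2, hβ]
        ring_nf
      have hα0 : 0 ≤ α := (Real.exp_pos _).le
      calc V (s (m + 1)) ≤ α * V (s m) + c * β := hstep
        _ ≤ α * (Real.exp (-ω₁ * goodLen s good m 0 + ω₂ * badLen s good m 0) * V 0 +
              c * ∑ j ∈ Finset.range m,
                Real.exp (-ω₁ * goodLen s good m (j + 1) + ω₂ * badLen s good m j)) + c * β := by
            gcongr
        _ = Real.exp (-ω₁ * goodLen s good (m + 1) 0 + ω₂ * badLen s good (m + 1) 0) * V 0 +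
            c * ∑ j ∈ Finset.range (m + 1),
              Real.exp (-ω₁ * goodLen s good (m + 1) (j + 1) + ω₂ * badLen s good (m + 1) j) := by
            rw [Finset.sum_range_succ, hE, hlast,
              Finset.sum_congr rfl (fun j hj => hterm j (Finset.mem_range.mp hj)),
              ← Finset.mul_sum]
            ring
  have h := key N le_rfl
  rwa [hsN] at h
end
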